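/- arXiv:1501.01415 — 3 statements merged into one kernel-verified Lean document; each statement's English description precedes it below -/
import Mathlib

section
/- Let σ ∈ (1/2, 1). Then there exist constants 0 < c₁ ≤ c₂ depending only on σ (not on k) such that for every k ∈ ℝ with k ≠ 0 and every ξ with |ξ| ≤ |k|/2, c₁ · 2σ(2σ−1)|k|^{2σ−2} ξ² ≤ p_k(ξ) ≤ c₂ · 2σ(2σ−1)|k|^{2σ−2} ξ². (Low-frequency two-sided bound for p_k.) -/
open Real

/-- The symbol `p_k(ξ) = |ξ+k|^{2σ} − |k|^{2σ} − 2σ|k|^{2σ−2}kξ`. -/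
noncomputable def pSymb (σ k : ℝ) (ξ : ℝ) : ℝ :=
  |ξ + k| ^ (2*σ) - |k| ^ (2*σ) - 2*σ * |k| ^ (2*σ - 2) * k * ξ

lemma tangent_le_of_convexOn {S : Set ℝ} {f : ℝ → ℝ} {x y d : ℝ} (hf : ConvexOn ℝ S f)
    (hx : x ∈ S) (hy : y ∈ S) (hd : HasDerivAt f d x) :
    f x + d * (y - x) ≤ f y := by
  rcases lt_trichotomy x y with h | h | h
  · have h1 := hf.le_slope_of_hasDerivAt hx hy h hd
    rw [slope_def_field] at h1
    have h2 : 0 < y - x := sub_pos.2 h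
    have h3 := (le_div_iff₀ h2).1 h1
    linarith
  · simp [h]
  · have h1 := hf.slope_le_of_hasDerivAt hy hx h hd
    rw [slope_def_field] at h1
    have h2 : 0 < x - y := sub_pos.2 h
    have h3 := (div_le_iff₀ h2).1 h1
    linarith

lemma hasDerivAt_aux {q m : ℝ} {x : ℝ} (hx : x ≠ 0) :
    HasDerivAt (fun y : ℝ => y ^ q - m/2 * y^2) (q * x ^ (q-1) - m * x) x := by
  have h1 : HasDerivAt (fun y : ℝ => y ^ q) (q * x ^ (q-1)) x :=
    Real.hasDerivAt_rpow_const (Or.inl hx)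
  have h2 : HasDerivAt (fun y : ℝ => m/2 * y^2) (m/2 * (2 * x)) x := by
    simpa using (hasDerivAt_pow 2 x).const_mul (m/2)
  have := h1.sub h2
  exact this.congr_deriv (by ring)

lemma hasDerivAt_aux' {q m : ℝ} {x : ℝ} (hx : x ≠ 0) :
    HasDerivAt (fun y : ℝ => q * y ^ (q-1) - m * y) (q * ((q-1) * x ^ (q-2)) - m) x := by
  have h1 : HasDerivAt (fun y : ℝ => y ^ (q-1)) ((q-1) * x ^ (q-1-1)) x :=
    Real.hasDerivAt_rpow_const (Or.inl hx)
  have h2 : HasDerivAt (fun y : ℝ => m * y) (m * 1) x := (hasDerivAt_id x).const_mul m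
  have := (h1.const_mul q).sub h2
  have he : q - 1 - 1 = q - 2 := by ring
  rw [he] at this
  exact this.congr_deriv (by ring)

lemma contOn_aux {q m : ℝ} :
    ContinuousOn (fun y : ℝ => y ^ q - m/2 * y^2) (Set.Icc (1/2:ℝ) (3/2)) := by
  intro x hx
  have hx0 : x ≠ 0 := by have := hx.1; intro h; rw [h] at this; norm_num at this
  exact ((Real.continuousAt_rpow_const x q (Or.inl hx0)).sub
    (by fun_prop)).continuousWithinAt

lemma convexOn_aux {q m : ℝ} (hq1 : 1 < q)
    (hm : ∀ x ∈ Set.Ioo (1/2:ℝ) (3/2), m ≤ q * ((q-1) * x ^ (q-2))) :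
    ConvexOn ℝ (Set.Icc (1/2:ℝ) (3/2)) (fun y : ℝ => y ^ q - m/2 * y^2) := by
  apply convexOn_of_hasDerivWithinAt2_nonneg (f' := fun x => q * x ^ (q-1) - m * x)
    (f'' := fun x => q * ((q-1) * x ^ (q-2)) - m) (convex_Icc _ _) contOn_aux
  · intro x hx
    rw [interior_Icc] at hx
    exact (hasDerivAt_aux (by nlinarith [hx.1] : (0:ℝ) < x).ne').hasDerivWithinAt
  · intro x hx
    rw [interior_Icc] at hx
    exact (hasDerivAt_aux' (by nlinarith [hx.1] : (0:ℝ) < x).ne').hasDerivWithinAt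
  · intro x hx
    rw [interior_Icc] at hx
    have := hm x hx
    linarith

lemma concaveOn_aux {q M : ℝ} (hq1 : 1 < q)
    (hM : ∀ x ∈ Set.Ioo (1/2:ℝ) (3/2), q * ((q-1) * x ^ (q-2)) ≤ M) :
    ConcaveOn ℝ (Set.Icc (1/2:ℝ) (3/2)) (fun y : ℝ => y ^ q - M/2 * y^2) := by
  apply concaveOn_of_hasDerivWithinAt2_nonpos (f' := fun x => q * x ^ (q-1) - M * x)
    (f'' := fun x => q * ((q-1) * x ^ (q-2)) - M) (convex_Icc _ _) contOn_aux
  · intro x hx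
    rw [interior_Icc] at hx
    exact (hasDerivAt_aux (by nlinarith [hx.1] : (0:ℝ) < x).ne').hasDerivWithinAt
  · intro x hx
    rw [interior_Icc] at hx
    exact (hasDerivAt_aux' (by nlinarith [hx.1] : (0:ℝ) < x).ne').hasDerivWithinAt
  · intro x hx
    rw [interior_Icc] at hx
    have := hM x hx
    linarith

/-- Core scalar bound: for `1 < q < 2` and `|t| ≤ 1/2`,
`(3/2)^(q-2)/2 * q(q-1) t² ≤ (1+t)^q - 1 - qt ≤ (1/2)^(q-2)/2 * q(q-1) t²`. -/
lemma core_bound {q : ℝ} (hq1 : 1 < q) (hq2 : q < 2) {t : ℝ} (ht : |t| ≤ 1/2) :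
    (3/2:ℝ) ^ (q-2) / 2 * (q*(q-1)*t^2) ≤ (1+t) ^ q - 1 - q*t ∧
    (1+t) ^ q - 1 - q*t ≤ (1/2:ℝ) ^ (q-2) / 2 * (q*(q-1)*t^2) := by
  obtain ⟨ht1, ht2⟩ := abs_le.1 ht
  have hmem1 : (1:ℝ) ∈ Set.Icc (1/2:ℝ) (3/2) := by norm_num
  have hmemt : (1+t) ∈ Set.Icc (1/2:ℝ) (3/2) := by constructor <;> linarith
  have hq0 : 0 < q - 1 := by linarith
  have hqe : q - 2 ≤ 0 := by linarith
  have one_rpow_q : (1:ℝ) ^ q = 1 := Real.one_rpow q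
  have one_rpow_q1 : (1:ℝ) ^ (q-1) = 1 := Real.one_rpow _
  constructor
  · -- lower bound via convexity
    set m : ℝ := q * (q-1) * (3/2:ℝ) ^ (q-2) with hm
    have hconv : ConvexOn ℝ (Set.Icc (1/2:ℝ) (3/2)) (fun y : ℝ => y ^ q - m/2 * y^2) := by
      apply convexOn_aux hq1
      intro x hx
      have hxp : (0:ℝ) < x := by nlinarith [hx.1]
      have hxr : (3/2:ℝ) ^ (q-2) ≤ x ^ (q-2) :=
        Real.rpow_le_rpow_of_nonpos hxp hx.2.le hqe
      have : q * (q-1) * (3/2:ℝ)^(q-2) ≤ q * (q-1) * x^(q-2) := by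
        apply mul_le_mul_of_nonneg_left hxr
        positivity
      rw [hm]; linarith
    have hd : HasDerivAt (fun y : ℝ => y ^ q - m/2 * y^2) (q - m) 1 := by
      have := hasDerivAt_aux (q := q) (m := m) (x := 1) one_ne_zero
      rw [one_rpow_q1] at this
      simpa using this
    have htan := tangent_le_of_convexOn hconv hmem1 hmemt hd
    simp only [one_rpow_q] at htan
    have hexp : (1+t)^2 = 1 + 2*t + t^2 := by ring
    have hmt : m/2 * (1+t)^2 = m/2 + m*t + m/2*t^2 := by ring
    have hgoal : (3/2:ℝ) ^ (q-2) / 2 * (q*(q-1)*t^2) = m/2 * t^2 := by rw [hm]; ring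
    rw [hgoal]
    nlinarith [htan]
  · -- upper bound via concavity
    set M : ℝ := q * (q-1) * (1/2:ℝ) ^ (q-2) with hM
    have hconc : ConcaveOn ℝ (Set.Icc (1/2:ℝ) (3/2)) (fun y : ℝ => y ^ q - M/2 * y^2) := by
      apply concaveOn_aux hq1
      intro x hx
      have hxp : (0:ℝ) < x := by nlinarith [hx.1]
      have hxr : x ^ (q-2) ≤ (1/2:ℝ) ^ (q-2) :=
        Real.rpow_le_rpow_of_nonpos (by norm_num) hx.1.le hqe
      have : q * (q-1) * x^(q-2) ≤ q * (q-1) * (1/2:ℝ)^(q-2) := by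
        apply mul_le_mul_of_nonneg_left hxr
        positivity
      rw [hM]; linarith
    have hconv := hconc.neg
    have hd : HasDerivAt (fun y : ℝ => -(y ^ q - M/2 * y^2)) (-(q - M)) 1 := by
      have := hasDerivAt_aux (q := q) (m := M) (x := 1) one_ne_zero
      rw [one_rpow_q1] at this
      exact this.neg.congr_deriv (by ring)
    have htan := tangent_le_of_convexOn hconv hmem1 hmemt hd
    simp only [Pi.neg_apply, one_rpow_q] at htan
    have hgoal : (1/2:ℝ) ^ (q-2) / 2 * (q*(q-1)*t^2) = M/2 * t^2 := by rw [hM]; ring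
    rw [hgoal]
    nlinarith [htan]

/-- Low-frequency two-sided bound for `p_k`, uniform in `k`:
`p_k(ξ) ∼ 2σ(2σ−1)|k|^{2σ−2}ξ²` for `|ξ| ≤ |k|/2`. -/
theorem pSymb_low_freq_bound (σ : ℝ) (hσ : σ ∈ Set.Ioo (1/2 : ℝ) 1) :
    ∃ c₁ c₂ : ℝ, 0 < c₁ ∧ c₁ ≤ c₂ ∧
      ∀ k : ℝ, k ≠ 0 → ∀ ξ : ℝ, |ξ| ≤ |k|/2 →
        c₁ * (2*σ*(2*σ - 1) * |k| ^ (2*σ - 2) * ξ ^ 2) ≤ pSymb σ k ξ ∧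
        pSymb σ k ξ ≤ c₂ * (2*σ*(2*σ - 1) * |k| ^ (2*σ - 2) * ξ ^ 2) := by
  obtain ⟨hσ1, hσ2⟩ := hσ
  set q : ℝ := 2 * σ with hqdef
  have hq1 : 1 < q := by rw [hqdef]; linarith
  have hq2 : q < 2 := by rw [hqdef]; linarith
  refine ⟨(3/2:ℝ) ^ (q-2) / 2, (1/2:ℝ) ^ (q-2) / 2, by positivity, ?_, ?_⟩
  · have := Real.rpow_le_rpow_of_nonpos (by norm_num : (0:ℝ) < 1/2)
      (by norm_num : (1/2:ℝ) ≤ 3/2) (by linarith : q - 2 ≤ 0)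
    linarith
  · intro k hk ξ hξ
    have hK : (0:ℝ) < |k| := abs_pos.2 hk
    set t : ℝ := ξ / k with htdef
    have hts : |t| ≤ 1/2 := by
      rw [htdef, abs_div, div_le_iff₀ hK]
      linarith
    obtain ⟨ht1, ht2⟩ := abs_le.1 hts
    have h1t : (0:ℝ) < 1 + t := by linarith
    -- key identities
    have hKq : (0:ℝ) < |k| ^ q := Real.rpow_pos_of_pos hK q
    have habs : |ξ + k| = |k| * (1 + t) := by
      have : ξ + k = k * (1 + t) := by rw [htdef]; field_simp; ring
      rw [this, abs_mul, abs_of_pos h1t]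
    have hA : |ξ + k| ^ q = |k| ^ q * (1 + t) ^ q := by
      rw [habs, Real.mul_rpow (abs_nonneg k) h1t.le]
    have hB : |k| ^ (q - 2) = |k| ^ q / k ^ 2 := by
      rw [Real.rpow_sub hK, show ((2:ℝ)) = ((2:ℕ):ℝ) by norm_num,
        Real.rpow_natCast, sq_abs]
    have hk2 : (k:ℝ) ^ 2 ≠ 0 := pow_ne_zero 2 hk
    have hC : 2*σ * |k| ^ (2*σ - 2) * k * ξ = |k| ^ q * (q * t) := by
      rw [show 2*σ - 2 = q - 2 from by rw [hqdef], hB, htdef, hqdef]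
      field_simp
    have hD : 2*σ*(2*σ - 1) * |k| ^ (2*σ - 2) * ξ ^ 2 = |k| ^ q * (q*(q-1)*t^2) := by
      rw [show 2*σ - 2 = q - 2 from by rw [hqdef], hB, htdef, hqdef]
      field_simp
    have hP : pSymb σ k ξ = |k| ^ q * ((1+t) ^ q - 1 - q*t) := by
      rw [pSymb, show 2*σ = q from rfl, hA, hC]
      ring
    obtain ⟨hlow, hhigh⟩ := core_bound hq1 hq2 hts
    constructor
    · rw [hD, hP]
      calc (3/2:ℝ) ^ (q-2)/2 * (|k| ^ q * (q*(q-1)*t^2))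
          = |k| ^ q * ((3/2:ℝ) ^ (q-2)/2 * (q*(q-1)*t^2)) := by ring
        _ ≤ |k| ^ q * ((1+t) ^ q - 1 - q*t) :=
          mul_le_mul_of_nonneg_left hlow hKq.le
    · rw [hD, hP]
      calc |k| ^ q * ((1+t) ^ q - 1 - q*t)
          ≤ |k| ^ q * ((1/2:ℝ) ^ (q-2)/2 * (q*(q-1)*t^2)) :=
          mul_le_mul_of_nonneg_left hhigh hKq.le
        _ = (1/2:ℝ) ^ (q-2)/2 * (|k| ^ q * (q*(q-1)*t^2)) := by ring
end

section
/- Let σ ∈ (1/2, 1). Then there exist constants 0 < c₁ ≤ c₂ depending only on σ (not on k) such that for every k ∈ ℝ with k ≠ 0 and every ξ with |ξ| ≥ |k|/2, c₁ |ξ|^{2σ} ≤ p_k(ξ) ≤ c₂ |ξ|^{2σ}. (High-frequency two-sided bound for p_k.) -/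
open Real

noncomputable def fAux (σ t : ℝ) : ℝ := |1 + t| ^ (2*σ) - 1 - 2*σ*t



lemma fAux_pos {σ : ℝ} (h1 : 1/2 < σ) (h2 : σ < 1) {t : ℝ} (ht : t ≠ 0) :
    0 < fAux σ t := by
  unfold fAux
  rcases le_or_gt (-1) t with h | h
  · have hb := one_add_mul_self_lt_rpow_one_add h ht (by linarith : (1:ℝ) < 2*σ)
    rw [abs_of_nonneg (by linarith : (0:ℝ) ≤ 1 + t)]
    linarith
  · have h0 : (0:ℝ) ≤ |1 + t| ^ (2*σ) := rpow_nonneg (abs_nonneg _) _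
    nlinarith

lemma abs_le_two_mul_rpow {σ t : ℝ} (h1 : 1/2 < σ) (h2 : σ < 1) (ht : 1/2 ≤ |t|) :
    |t| ≤ 2 * |t| ^ (2*σ) := by
  rcases le_or_gt 1 |t| with h | h
  · have : |t| ^ (1:ℝ) ≤ |t| ^ (2*σ) :=
      rpow_le_rpow_of_exponent_le h (by linarith)
    rw [rpow_one] at this
    have h0 : (0:ℝ) ≤ |t| ^ (2*σ) := rpow_nonneg (abs_nonneg _) _
    linarith
  · have hpos : (0:ℝ) < |t| := by linarith
    have : |t| ^ (2:ℝ) ≤ |t| ^ (2*σ) :=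
      rpow_le_rpow_of_exponent_ge hpos h.le (by linarith)
    have h2' : |t| ^ (2:ℝ) = |t| * |t| := by
      rw [show (2:ℝ) = ((2:ℕ):ℝ) by norm_num, rpow_natCast]; ring
    have hint : |t| * (1/2) ≤ |t| * |t| := mul_le_mul_of_nonneg_left ht (abs_nonneg t)
    calc |t| ≤ 2 * (|t| * |t|) := by linarith
      _ = 2 * |t| ^ (2:ℝ) := by rw [h2']
      _ ≤ 2 * |t| ^ (2*σ) := by linarith

lemma fAux_upper {σ t : ℝ} (h1 : 1/2 < σ) (h2 : σ < 1) (ht : 1/2 ≤ |t|) :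
    fAux σ t ≤ 13 * |t| ^ (2*σ) := by
  have habs : |1 + t| ≤ 3 * |t| := by
    have := abs_add_le (1:ℝ) t
    rw [abs_one] at this
    linarith
  have h3 : |1 + t| ^ (2*σ) ≤ (3*|t|) ^ (2*σ) :=
    rpow_le_rpow (abs_nonneg _) habs (by linarith)
  have h4 : (3*|t|) ^ (2*σ) = 3 ^ (2*σ) * |t| ^ (2*σ) :=
    mul_rpow (by norm_num) (abs_nonneg _)
  have h5 : (3:ℝ) ^ (2*σ) ≤ 9 := by
    have : (3:ℝ) ^ (2*σ) ≤ 3 ^ (2:ℝ) :=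
      rpow_le_rpow_of_exponent_le (by norm_num) (by linarith)
    rw [show (2:ℝ) = ((2:ℕ):ℝ) by norm_num, rpow_natCast] at this
    norm_num at this
    linarith
  have h6 : |t| ≤ 2 * |t| ^ (2*σ) := abs_le_two_mul_rpow h1 h2 ht
  have h7 : -(2*σ*t) ≤ 2*σ*|t| := by
    have := neg_abs_le t
    nlinarith
  have h0 : (0:ℝ) ≤ |t| ^ (2*σ) := rpow_nonneg (abs_nonneg _) _
  unfold fAux
  nlinarith

lemma fAux_tail {σ : ℝ} (h1 : 1/2 < σ) (h2 : σ < 1) {t : ℝ}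
    (ht : max 2 ((16*σ+8) ^ (2*σ-1)⁻¹) ≤ |t|) :
    (1/8) * |t| ^ (2*σ) ≤ fAux σ t := by
  set x := |t| with hx
  have hx2 : (2:ℝ) ≤ x := le_trans (le_max_left _ _) ht
  have hxA : (16*σ+8) ^ (2*σ-1)⁻¹ ≤ x := le_trans (le_max_right _ _) ht
  have hxpos : (0:ℝ) < x := by linarith
  -- step 1 : 8 + 16 σ x ≤ x ^ (2σ)
  have hs1 : 8 + 16*σ*x ≤ x ^ (2*σ) := by
    have hsplit : x ^ (2*σ) = x ^ (1:ℝ) * x ^ (2*σ-1) := by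
      rw [← rpow_add hxpos]; ring_nf
    have hexp : (2*σ-1) ≠ 0 := by intro h; nlinarith [h]
    have hmono : ((16*σ+8) ^ (2*σ-1)⁻¹) ^ (2*σ-1) ≤ x ^ (2*σ-1) :=
      rpow_le_rpow (rpow_nonneg (by linarith) _) hxA (by linarith)
    rw [rpow_inv_rpow (by linarith : (0:ℝ) ≤ 16*σ+8) hexp] at hmono
    have hx1 : x ^ (1:ℝ) = x := rpow_one x
    rw [hx1] at hsplit
    nlinarith [mul_le_mul_of_nonneg_left hmono hxpos.le]
  -- step 2 : |1+t| ≥ x/2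
  have habs : x / 2 ≤ |1 + t| := by
    have h := abs_sub_abs_le_abs_sub t (-1)
    simp only [abs_neg, abs_one] at h
    have : t - (-1) = 1 + t := by ring
    rw [this] at h
    linarith
  have hlow : (x/2) ^ (2*σ) ≤ |1 + t| ^ (2*σ) :=
    rpow_le_rpow (by positivity) habs (by linarith)
  have hquarter : x ^ (2*σ) / 4 ≤ (x/2) ^ (2*σ) := by
    have hdiv : (x/2) ^ (2*σ) = x ^ (2*σ) / 2 ^ (2*σ) :=
      div_rpow (le_of_lt hxpos) (by norm_num : (0:ℝ) ≤ 2) (2*σ)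
    have h24 : (2:ℝ) ^ (2*σ) ≤ 4 := by
      have : (2:ℝ) ^ (2*σ) ≤ 2 ^ (2:ℝ) :=
        rpow_le_rpow_of_exponent_le (by norm_num) (by linarith)
      rw [show (2:ℝ) = ((2:ℕ):ℝ) by norm_num, rpow_natCast] at this
      norm_num at this
      linarith
    have h2pos : (0:ℝ) < 2 ^ (2*σ) := rpow_pos_of_pos (by norm_num) _
    rw [hdiv]
    apply div_le_div_of_nonneg_left (rpow_nonneg (le_of_lt hxpos) _) h2pos h24
  have h7 : -(2*σ*t) ≥ -(2*σ*x) := by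
    have := neg_abs_le t
    have := le_abs_self t
    nlinarith
  unfold fAux
  nlinarith [rpow_nonneg (le_of_lt hxpos) (2*σ)]


lemma fAux_continuous (σ : ℝ) (hσ : 0 ≤ σ) : Continuous (fAux σ) := by
  unfold fAux
  have h1 : Continuous fun t : ℝ => |1 + t| ^ (2*σ) := by
    apply Continuous.rpow_const (continuous_const.add continuous_id).abs
    intro x; right; linarith
  continuity

lemma fAux_compact_min {σ : ℝ} (h1 : 1/2 < σ) (h2 : σ < 1) (M : ℝ) (hM : 2 ≤ M)
    (hpos : ∀ t : ℝ, t ≠ 0 → 0 < fAux σ t) :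
    ∃ ε > 0, ∀ t : ℝ, 1/2 ≤ |t| → |t| ≤ M → ε * |t| ^ (2*σ) ≤ fAux σ t := by
  set S : Set ℝ := Set.Icc (-M) M \ Set.Ioo (-(1/2)) (1/2) with hS
  have hcomp : IsCompact S := isCompact_Icc.diff isOpen_Ioo
  have hne : S.Nonempty := by
    refine ⟨1, ⟨⟨by linarith, by linarith⟩, ?_⟩⟩
    simp only [Set.mem_Ioo, not_and_or, not_lt]
    right; norm_num
  have hmem : ∀ t : ℝ, t ∈ S → 1/2 ≤ |t| := by
    intro t htS
    rcases htS with ⟨_, hni⟩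
    simp only [Set.mem_Ioo, not_and_or, not_lt] at hni
    rcases hni with h | h
    · rw [abs_of_nonpos (by linarith)]; linarith
    · rw [abs_of_nonneg (by linarith)]; linarith
  have hcont : ContinuousOn (fun t => fAux σ t / |t| ^ (2*σ)) S := by
    apply ContinuousOn.div ((fAux_continuous σ (by linarith)).continuousOn)
    · exact (Continuous.rpow_const continuous_abs (fun x => Or.inr (by linarith))).continuousOn
    · intro t htS
      have := hmem t htS
      positivity
  obtain ⟨t₀, ht₀S, hmin⟩ := hcomp.exists_isMinOn hne hcont
  have ht₀ : 1/2 ≤ |t₀| := hmem t₀ ht₀S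
  have hden₀ : (0:ℝ) < |t₀| ^ (2*σ) := by positivity
  have hε : 0 < fAux σ t₀ / |t₀| ^ (2*σ) :=
    div_pos (hpos t₀ (by intro h; rw [h] at ht₀; simp at ht₀; linarith)) hden₀
  refine ⟨_, hε, fun t htl htu => ?_⟩
  have htS : t ∈ S := by
    constructor
    · rcases abs_le.mp htu with ⟨ha, hb⟩; exact ⟨ha, hb⟩
    · simp only [Set.mem_Ioo, not_and_or, not_lt]
      rcases le_or_gt 0 t with h | h
      · right; rw [abs_of_nonneg h] at htl; linarith
      · left; rw [abs_of_neg h] at htl; linarith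
  have hden : (0:ℝ) < |t| ^ (2*σ) := by positivity
  have := hmin htS
  calc fAux σ t₀ / |t₀| ^ (2*σ) * |t| ^ (2*σ)
      ≤ fAux σ t / |t| ^ (2*σ) * |t| ^ (2*σ) := by
        apply mul_le_mul_of_nonneg_right this hden.le
    _ = fAux σ t := by field_simp


lemma fAux_key {σ : ℝ} (h1 : 1/2 < σ) (h2 : σ < 1) :
    ∃ c₁ c₂ : ℝ, 0 < c₁ ∧ c₁ ≤ c₂ ∧
      ∀ t : ℝ, 1/2 ≤ |t| →
        c₁ * |t| ^ (2*σ) ≤ fAux σ t ∧ fAux σ t ≤ c₂ * |t| ^ (2*σ) := by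
  set M := max 2 ((16*σ+8) ^ (2*σ-1)⁻¹) with hMdef
  have hM : 2 ≤ M := le_max_left _ _
  obtain ⟨ε, hε, hcm⟩ := fAux_compact_min h1 h2 M hM (fun t ht => fAux_pos h1 h2 ht)
  refine ⟨min ε (1/8), 13, by positivity, by
      have := min_le_right ε (1/8); linarith, fun t ht => ?_⟩
  have hrp : (0:ℝ) ≤ |t| ^ (2*σ) := rpow_nonneg (abs_nonneg _) _
  constructor
  · rcases le_or_gt |t| M with h | h
    · calc min ε (1/8) * |t| ^ (2*σ) ≤ ε * |t| ^ (2*σ) :=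
          mul_le_mul_of_nonneg_right (min_le_left _ _) hrp
        _ ≤ fAux σ t := hcm t ht h
    · calc min ε (1/8) * |t| ^ (2*σ) ≤ (1/8) * |t| ^ (2*σ) :=
          mul_le_mul_of_nonneg_right (min_le_right _ _) hrp
        _ ≤ fAux σ t := fAux_tail h1 h2 h.le
  · exact fAux_upper h1 h2 ht


lemma pSymb_scale {σ : ℝ} (h1 : 1/2 < σ) (h2 : σ < 1) {k : ℝ} (hk : k ≠ 0) (ξ : ℝ) :
    pSymb σ k ξ = |k| ^ (2*σ) * fAux σ (ξ / k) := by
  have hk0 : (0:ℝ) < |k| := abs_pos.mpr hk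
  have e1 : |ξ + k| = |k| * |1 + ξ/k| := by
    rw [← abs_mul]
    congr 1
    field_simp
    ring
  have e2 : |ξ + k| ^ (2*σ) = |k| ^ (2*σ) * |1 + ξ/k| ^ (2*σ) := by
    rw [e1, mul_rpow hk0.le (abs_nonneg _)]
  have e3 : |k| ^ (2*σ - 2) = |k| ^ (2*σ) / k^2 := by
    rw [rpow_sub hk0, show ((2:ℝ)) = ((2:ℕ):ℝ) by norm_num, rpow_natCast, sq_abs]
  unfold pSymb fAux
  rw [e2, e3]
  have hk2 : (k:ℝ)^2 ≠ 0 := pow_ne_zero 2 hk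
  field_simp
/-- High-frequency two-sided bound for `p_k`, uniform in `k`:
`p_k(ξ) ∼ |ξ|^{2σ}` for `|ξ| ≥ |k|/2`. -/
theorem pSymb_high_freq_bound (σ : ℝ) (hσ : σ ∈ Set.Ioo (1/2 : ℝ) 1) :
    ∃ c₁ c₂ : ℝ, 0 < c₁ ∧ c₁ ≤ c₂ ∧
      ∀ k : ℝ, k ≠ 0 → ∀ ξ : ℝ, |k|/2 ≤ |ξ| →
        c₁ * |ξ| ^ (2*σ) ≤ pSymb σ k ξ ∧ pSymb σ k ξ ≤ c₂ * |ξ| ^ (2*σ) := by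
  obtain ⟨h1, h2⟩ := hσ
  obtain ⟨c₁, c₂, hc₁, hc₁₂, hbound⟩ := fAux_key h1 h2
  refine ⟨c₁, c₂, hc₁, hc₁₂, fun k hk ξ hξ => ?_⟩
  have hk0 : (0:ℝ) < |k| := abs_pos.mpr hk
  have habs : |ξ| = |k| * |ξ/k| := by
    rw [abs_div]
    field_simp
  have ht : 1/2 ≤ |ξ/k| := by
    rw [abs_div, le_div_iff₀ hk0]
    linarith
  have hξrw : |ξ| ^ (2*σ) = |k| ^ (2*σ) * |ξ/k| ^ (2*σ) := by
    rw [habs, Real.mul_rpow hk0.le (abs_nonneg _)]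
  obtain ⟨hlow, hup⟩ := hbound (ξ/k) ht
  have hkp : (0:ℝ) ≤ |k| ^ (2*σ) := Real.rpow_nonneg (abs_nonneg _) _
  rw [pSymb_scale h1 h2 hk ξ, hξrw]
  constructor
  · calc c₁ * (|k| ^ (2*σ) * |ξ/k| ^ (2*σ)) = |k| ^ (2*σ) * (c₁ * |ξ/k| ^ (2*σ)) := by ring
      _ ≤ |k| ^ (2*σ) * fAux σ (ξ/k) := mul_le_mul_of_nonneg_left hlow hkp
  · calc |k| ^ (2*σ) * fAux σ (ξ/k) ≤ |k| ^ (2*σ) * (c₂ * |ξ/k| ^ (2*σ)) :=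
        mul_le_mul_of_nonneg_left hup hkp
      _ = c₂ * (|k| ^ (2*σ) * |ξ/k| ^ (2*σ)) := by ring
end

section
/- Let σ ∈ (1/2, 1). Then there exists a constant C > 0 depending only on σ (not on k) such that for every k ∈ ℝ with k ≠ 0 and every ξ ∈ ℝ, p_k(ξ) ≤ C |ξ|^{2σ}. (Uniform upper bound for the symbol p_k.) -/
open Real

open scoped NNReal

lemma holder_sub {β a b : ℝ} (hβ0 : 0 ≤ β) (hβ1 : β ≤ 1) (hb : 0 ≤ b) (hba : b ≤ a) :
    a ^ β - b ^ β ≤ (a - b) ^ β := by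
  have hab : (0:ℝ) ≤ a - b := by linarith
  have h := NNReal.rpow_add_le_add_rpow ((a - b).toNNReal) (b.toNNReal) hβ0 hβ1
  rw [← Real.toNNReal_add hab hb] at h
  have h2 : ((((a - b + b).toNNReal) ^ β : ℝ≥0) : ℝ) ≤
      (((a - b).toNNReal ^ β : ℝ≥0) : ℝ) + ((b.toNNReal ^ β : ℝ≥0) : ℝ) := by
    exact_mod_cast h
  rw [NNReal.coe_rpow, NNReal.coe_rpow, NNReal.coe_rpow,
    Real.coe_toNNReal _ (by linarith), Real.coe_toNNReal _ hab, Real.coe_toNNReal _ hb] at h2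
  have : a - b + b = a := by ring
  rw [this] at h2
  linarith

lemma mvt_rpow {α x y : ℝ} (hα : 1 ≤ α) (hx : 0 < x) (hxy : x < y) :
    ∃ c ∈ Set.Ioo x y, y ^ α - x ^ α = α * c ^ (α - 1) * (y - x) := by
  obtain ⟨c, hc, hc2⟩ := exists_hasDerivAt_eq_slope (fun t => t ^ α)
    (fun t => α * t ^ (α - 1)) hxy
    (fun t ht => (Real.continuousAt_rpow_const t α (Or.inr (by linarith))).continuousWithinAt)
    (fun t ht => Real.hasDerivAt_rpow_const (Or.inl (by nlinarith [ht.1])))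
  refine ⟨c, hc, ?_⟩
  rw [eq_div_iff (by nlinarith : y - x ≠ 0)] at hc2
  linarith [hc2]

lemma key {σ : ℝ} (hσ1 : 1/2 < σ) (hσ2 : σ < 1) {k : ℝ} (hk : 0 < k) (ξ : ℝ) :
    pSymb σ k ξ ≤ 13 * |ξ| ^ (2*σ) := by
  have hα1 : (1:ℝ) < 2*σ := by linarith
  have hα2 : 2*σ < 2 := by linarith
  have hkk : k ^ (2*σ-2) * k = k ^ (2*σ-1) := by
    have h := Real.rpow_add hk (2*σ-2) 1
    rw [Real.rpow_one] at h
    rw [show 2*σ-1 = 2*σ-2+1 by ring, h]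
  have hps : pSymb σ k ξ = |ξ+k| ^ (2*σ) - k ^ (2*σ) - 2*σ * k ^ (2*σ-1) * ξ := by
    unfold pSymb
    rw [abs_of_pos hk,
      show 2*σ * k ^ (2*σ-2) * k * ξ = 2*σ * (k ^ (2*σ-2) * k) * ξ from by ring, hkk]
  rw [hps]
  rcases eq_or_ne ξ 0 with rfl | hξ0
  · simp [abs_of_pos hk, Real.zero_rpow (by positivity : 2*σ ≠ 0)]
  have hξpos : 0 < |ξ| := abs_pos.mpr hξ0
  have hξαpos : (0:ℝ) < |ξ| ^ (2*σ) := Real.rpow_pos_of_pos hξpos _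
  have habs : |ξ| ^ (2*σ-1) * |ξ| = |ξ| ^ (2*σ) := by
    have h := Real.rpow_add hξpos (2*σ-1) 1
    rw [Real.rpow_one] at h
    rw [← h, show 2*σ-1+1 = 2*σ by ring]
  rcases le_or_gt k (2*|ξ|) with hbig | hsmall
  · -- |ξ| ≥ k/2
    have h1 : |ξ+k| ^ (2*σ) ≤ 9 * |ξ| ^ (2*σ) := by
      have h3 : |ξ+k| ≤ 3*|ξ| := by
        calc |ξ+k| ≤ |ξ| + |k| := abs_add_le _ _
        _ ≤ 3*|ξ| := by rw [abs_of_pos hk]; linarith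
      calc |ξ+k| ^ (2*σ) ≤ (3*|ξ|) ^ (2*σ) :=
            Real.rpow_le_rpow (abs_nonneg _) h3 (by linarith)
      _ = 3 ^ (2*σ) * |ξ| ^ (2*σ) := Real.mul_rpow (by norm_num) (abs_nonneg _)
      _ ≤ 9 * |ξ| ^ (2*σ) := by
          gcongr
          calc (3:ℝ) ^ (2*σ) ≤ 3 ^ (2:ℝ) :=
              Real.rpow_le_rpow_of_exponent_le (by norm_num) (by linarith)
          _ = 9 := by
              rw [show (2:ℝ) = ((2:ℕ):ℝ) by norm_num, Real.rpow_natCast]; norm_num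
    have h2 : (0:ℝ) ≤ k ^ (2*σ) := Real.rpow_nonneg hk.le _
    have h3 : -(2*σ * k ^ (2*σ-1) * ξ) ≤ 4 * |ξ| ^ (2*σ) := by
      have hk1 : k ^ (2*σ-1) ≤ (2*|ξ|) ^ (2*σ-1) :=
        Real.rpow_le_rpow hk.le hbig (by linarith)
      have h2ξ : (2*|ξ|) ^ (2*σ-1) = 2 ^ (2*σ-1) * |ξ| ^ (2*σ-1) :=
        Real.mul_rpow (by norm_num) (abs_nonneg _)
      have h2b : (2:ℝ) ^ (2*σ-1) ≤ 2 := by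
        calc (2:ℝ) ^ (2*σ-1) ≤ 2 ^ (1:ℝ) :=
            Real.rpow_le_rpow_of_exponent_le (by norm_num) (by linarith)
        _ = 2 := Real.rpow_one 2
      have hkc : 0 ≤ k ^ (2*σ-1) := Real.rpow_nonneg hk.le _
      have hξc : 0 ≤ |ξ| ^ (2*σ-1) := Real.rpow_nonneg (abs_nonneg _) _
      have hA : (0:ℝ) ≤ 2*σ * k ^ (2*σ-1) := by positivity
      have hstep1 : -(2*σ * k ^ (2*σ-1) * ξ) ≤ 2*σ * k ^ (2*σ-1) * |ξ| := by
        have h := mul_le_mul_of_nonneg_left (neg_le_abs ξ) hA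
        linarith [h]
      have h4 : 2*σ * 2 ^ (2*σ-1) ≤ 4 := by nlinarith [Real.rpow_nonneg (by norm_num : (0:ℝ) ≤ 2) (2*σ-1)]
      calc -(2*σ * k ^ (2*σ-1) * ξ) ≤ 2*σ * k ^ (2*σ-1) * |ξ| := hstep1
      _ ≤ 2*σ * (2 ^ (2*σ-1) * |ξ| ^ (2*σ-1)) * |ξ| := by
          rw [← h2ξ]; gcongr
      _ = (2*σ * 2 ^ (2*σ-1)) * (|ξ| ^ (2*σ-1) * |ξ|) := by ring
      _ ≤ 4 * (|ξ| ^ (2*σ-1) * |ξ|) :=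
          mul_le_mul_of_nonneg_right h4 (mul_nonneg hξc hξpos.le)
      _ = 4 * |ξ| ^ (2*σ) := by rw [habs]
    linarith
  · -- 2|ξ| < k : MVT case
    have hkξ : 0 < ξ + k := by
      have := abs_lt.mp (show |ξ| < k/2 by linarith)
      linarith [this.1]
    rw [abs_of_pos hkξ]
    rcases lt_or_gt_of_ne hξ0 with hneg | hpos
    · -- ξ < 0 : MVT on (k+ξ, k)
      obtain ⟨c, hc, hcd⟩ := mvt_rpow hα1.le hkξ (show ξ + k < k by linarith)
      have hck : c ≤ k := hc.2.le
      have hc0 : 0 < c := lt_trans hkξ hc.1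
      have hhol : k ^ (2*σ-1) - c ^ (2*σ-1) ≤ (k - c) ^ (2*σ-1) :=
        holder_sub (by linarith) (by linarith) hc0.le hck
      have hkc2 : (k - c) ^ (2*σ-1) ≤ |ξ| ^ (2*σ-1) := by
        apply Real.rpow_le_rpow (by linarith) _ (by linarith)
        have := hc.1
        rw [abs_of_neg hneg]; linarith
      -- hcd : k^α - (ξ+k)^α = α c^(α-1) (k - (ξ+k)) = α c^(α-1) (-ξ)
      have hp : (ξ+k) ^ (2*σ) - k ^ (2*σ) - 2*σ * k ^ (2*σ-1) * ξ
          = (2*σ) * (k ^ (2*σ-1) - c ^ (2*σ-1)) * (-ξ) := by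
        have : k ^ (2*σ) - (ξ+k) ^ (2*σ) = 2*σ * c ^ (2*σ-1) * (k - (ξ+k)) := hcd
        ring_nf
        ring_nf at this
        linarith
      rw [hp]
      calc (2*σ) * (k ^ (2*σ-1) - c ^ (2*σ-1)) * (-ξ)
          ≤ (2*σ) * (|ξ| ^ (2*σ-1)) * (-ξ) := by
            have h1 : k ^ (2*σ-1) - c ^ (2*σ-1) ≤ |ξ| ^ (2*σ-1) := le_trans hhol hkc2
            have h := mul_le_mul_of_nonneg_right
              (mul_le_mul_of_nonneg_left h1 (by linarith : (0:ℝ) ≤ 2*σ))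
              (by linarith : (0:ℝ) ≤ -ξ)
            linarith [h]
      _ = (2*σ) * (|ξ| ^ (2*σ-1) * |ξ|) := by rw [abs_of_neg hneg]; ring
      _ = (2*σ) * |ξ| ^ (2*σ) := by rw [habs]
      _ ≤ 13 * |ξ| ^ (2*σ) := by nlinarith
    · -- ξ > 0 : MVT on (k, k+ξ)
      obtain ⟨c, hc, hcd⟩ := mvt_rpow hα1.le hk (show k < ξ + k by linarith)
      have hc0 : 0 < c := lt_trans hk hc.1
      have hhol : c ^ (2*σ-1) - k ^ (2*σ-1) ≤ (c - k) ^ (2*σ-1) :=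
        holder_sub (by linarith) (by linarith) hk.le hc.1.le
      have hkc2 : (c - k) ^ (2*σ-1) ≤ |ξ| ^ (2*σ-1) := by
        apply Real.rpow_le_rpow (by linarith [hc.1]) _ (by linarith)
        rw [abs_of_pos hpos]; linarith [hc.2]
      have hp : (ξ+k) ^ (2*σ) - k ^ (2*σ) - 2*σ * k ^ (2*σ-1) * ξ
          = (2*σ) * (c ^ (2*σ-1) - k ^ (2*σ-1)) * ξ := by
        have : (ξ+k) ^ (2*σ) - k ^ (2*σ) = 2*σ * c ^ (2*σ-1) * ((ξ+k) - k) := hcd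
        ring_nf
        ring_nf at this
        linarith
      rw [hp]
      calc (2*σ) * (c ^ (2*σ-1) - k ^ (2*σ-1)) * ξ
          ≤ (2*σ) * (|ξ| ^ (2*σ-1)) * ξ := by
            have h1 : c ^ (2*σ-1) - k ^ (2*σ-1) ≤ |ξ| ^ (2*σ-1) := le_trans hhol hkc2
            have h := mul_le_mul_of_nonneg_right
              (mul_le_mul_of_nonneg_left h1 (by linarith : (0:ℝ) ≤ 2*σ))
              (by linarith : (0:ℝ) ≤ ξ)
            linarith [h]
      _ = (2*σ) * (|ξ| ^ (2*σ-1) * |ξ|) := by rw [abs_of_pos hpos]; ring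
      _ = (2*σ) * |ξ| ^ (2*σ) := by rw [habs]
      _ ≤ 13 * |ξ| ^ (2*σ) := by nlinarith

/-- Uniform upper bound for the symbol: `p_k(ξ) ≲ |ξ|^{2σ}`, with constant independent of `k`. -/
theorem pSymb_upper_bound (σ : ℝ) (hσ : σ ∈ Set.Ioo (1/2 : ℝ) 1) :
    ∃ C : ℝ, 0 < C ∧
      ∀ k : ℝ, k ≠ 0 → ∀ ξ : ℝ, pSymb σ k ξ ≤ C * |ξ| ^ (2*σ) := by
  obtain ⟨hσ1, hσ2⟩ := hσ
  refine ⟨13, by norm_num, fun k hk ξ => ?_⟩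
  rcases hk.lt_or_gt with hneg | hpos
  · have hsymm : pSymb σ k ξ = pSymb σ (-k) (-ξ) := by
      unfold pSymb
      rw [show -ξ + -k = -(ξ + k) by ring, abs_neg, abs_neg]
      ring
    rw [hsymm, show |ξ| = |-ξ| by rw [abs_neg]]
    exact key hσ1 hσ2 (by linarith : (0:ℝ) < -k) (-ξ)
  · exact key hσ1 hσ2 hpos ξ
end
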